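/- The Desboves map f_{a,b,c} is an everywhere defined (regular) holomorphic self-map of ℙ²(ℂ) if and only if abc(a+b+c)(a+1−b)(b+1−c)(c+1−a) ≠ 0. -/
import Mathlib


/-- `Φ(x,y,z) = x³ + y³ + z³`. -/
noncomputable def fermatPhi (x y z : ℂ) : ℂ := x ^ 3 + y ^ 3 + z ^ 3

/-- The Desboves map `f_{a,b,c}` on homogeneous representatives in `ℂ³`. -/
noncomputable def desbovesF (a b c : ℂ) (x y z : ℂ) : ℂ × ℂ × ℂ :=
  (x * (y ^ 3 - z ^ 3 + a * fermatPhi x y z),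
   y * (z ^ 3 - x ^ 3 + b * fermatPhi x y z),
   z * (x ^ 3 - y ^ 3 + c * fermatPhi x y z))

private lemma cube_root (u : ℂ) : ∃ w : ℂ, w ^ 3 = u :=
  IsAlgClosed.exists_pow_nat_eq u (by norm_num)

private lemma cube_eq_zero {w : ℂ} (h : w ^ 3 = 0) : w = 0 := by
  exact pow_eq_zero_iff (by norm_num) |>.1 h

/-- **Regularity criterion for Desboves maps** (Eq. (4.4)).
The Desboves map `f_{a,b,c}` is an everywhere defined (regular) holomorphic self-map of
`ℙ²(ℂ)` — i.e. the three homogeneous quartics have no common zero other than `(0,0,0)` —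
if and only if `abc(a+b+c)(a+1−b)(b+1−c)(c+1−a) ≠ 0`. -/
theorem desboves_regular_iff (a b c : ℂ) :
    (∀ x y z : ℂ, (x, y, z) ≠ ((0 : ℂ), (0 : ℂ), (0 : ℂ)) →
        desbovesF a b c x y z ≠ ((0 : ℂ), (0 : ℂ), (0 : ℂ))) ↔
      a * b * c * (a + b + c) * (a + 1 - b) * (b + 1 - c) * (c + 1 - a) ≠ 0 := by
  constructor
  · intro hreg
    by_contra hp
    rcases mul_eq_zero.1 hp with hp | h7
    rcases mul_eq_zero.1 hp with hp | h6
    rcases mul_eq_zero.1 hp with hp | h5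
    rcases mul_eq_zero.1 hp with hp | h4
    rcases mul_eq_zero.1 hp with hp | hc
    rcases mul_eq_zero.1 hp with ha | hb
    · -- a = 0
      exact hreg 1 0 0 (by norm_num) (by simp [desbovesF, fermatPhi, ha])
    · -- b = 0
      exact hreg 0 1 0 (by norm_num) (by simp [desbovesF, fermatPhi, hb])
    · -- c = 0
      exact hreg 0 0 1 (by norm_num) (by simp [desbovesF, fermatPhi, hc])
    · -- a + b + c = 0
      obtain ⟨x, hx3⟩ := cube_root (1 + a + 2*b)
      obtain ⟨y, hy3⟩ := cube_root (1 - 2*a - b)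
      obtain ⟨z, hz3⟩ := cube_root (1 + a - b)
      refine hreg x y z ?_ ?_
      · intro h
        rw [Prod.mk.injEq, Prod.mk.injEq] at h
        obtain ⟨hx, hy, hz⟩ := h
        subst hx; subst hy; subst hz
        have h30 : (3 : ℂ) = 0 := by linear_combination -hx3 - hy3 - hz3
        norm_num at h30
      · simp only [desbovesF, fermatPhi, Prod.mk.injEq]
        refine ⟨?_, ?_, ?_⟩
        · linear_combination x*hy3 - x*hz3 + a*x*hx3 + a*x*hy3 + a*x*hz3
        · linear_combination y*hz3 - y*hx3 + b*y*hx3 + b*y*hy3 + b*y*hz3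
        · linear_combination z*hx3 - z*hy3 + c*z*hx3 + c*z*hy3 + c*z*hz3 + 3*z*h4
    · -- a + 1 - b = 0
      obtain ⟨x, hx3⟩ := cube_root (-(1 + a))
      obtain ⟨y, hy3⟩ := cube_root a
      refine hreg x y 0 ?_ ?_
      · intro h
        rw [Prod.mk.injEq, Prod.mk.injEq] at h
        obtain ⟨hx, hy, -⟩ := h
        subst hx; subst hy
        have h10 : (1 : ℂ) = 0 := by linear_combination hx3 + hy3
        norm_num at h10
      · simp only [desbovesF, fermatPhi, Prod.mk.injEq]
        refine ⟨?_, ?_, ?_⟩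
        · linear_combination (1+a)*x*hy3 + a*x*hx3
        · linear_combination (b-1)*y*hx3 + b*y*hy3 + y*h5
        · ring
    · -- b + 1 - c = 0
      obtain ⟨y, hy3⟩ := cube_root (1 + b)
      obtain ⟨z, hz3⟩ := cube_root (-b)
      refine hreg 0 y z ?_ ?_
      · intro h
        rw [Prod.mk.injEq, Prod.mk.injEq] at h
        obtain ⟨-, hy, hz⟩ := h
        subst hy; subst hz
        have h10 : (1 : ℂ) = 0 := by linear_combination -hy3 - hz3
        norm_num at h10
      · simp only [desbovesF, fermatPhi, Prod.mk.injEq]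
        refine ⟨?_, ?_, ?_⟩
        · ring
        · linear_combination b*y*hy3 + (1+b)*y*hz3
        · linear_combination (c-1)*z*hy3 + c*z*hz3 - z*h6
    · -- c + 1 - a = 0
      obtain ⟨x, hx3⟩ := cube_root (a - 1)
      obtain ⟨z, hz3⟩ := cube_root (-a)
      refine hreg x 0 z ?_ ?_
      · intro h
        rw [Prod.mk.injEq, Prod.mk.injEq] at h
        obtain ⟨hx, -, hz⟩ := h
        subst hx; subst hz
        have h10 : (1 : ℂ) = 0 := by linear_combination hx3 + hz3
        norm_num at h10
      · simp only [desbovesF, fermatPhi, Prod.mk.injEq]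
        refine ⟨?_, ?_, ?_⟩
        · linear_combination a*x*hx3 + (a-1)*x*hz3
        · ring
        · linear_combination (1+c)*z*hx3 + c*z*hz3 - z*h7
  · intro h
    have ha : a ≠ 0 := fun h0 => h (by rw [h0]; ring)
    have hb : b ≠ 0 := fun h0 => h (by rw [h0]; ring)
    have hc : c ≠ 0 := fun h0 => h (by rw [h0]; ring)
    have habc : a + b + c ≠ 0 := fun h0 => h (by rw [h0]; ring)
    have h4 : a + 1 - b ≠ 0 := fun h0 => h (by rw [h0]; ring)
    have h5 : b + 1 - c ≠ 0 := fun h0 => h (by rw [h0]; ring)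
    have h6 : c + 1 - a ≠ 0 := fun h0 => h (by rw [h0]; ring)
    intro x y z hxyz hf
    simp only [desbovesF, fermatPhi, Prod.mk.injEq] at hf
    obtain ⟨e1', e2', e3'⟩ := hf
    rcases mul_eq_zero.1 e1' with hx | e1 <;>
      rcases mul_eq_zero.1 e2' with hy | e2 <;>
        rcases mul_eq_zero.1 e3' with hz | e3
    · -- x = y = z = 0
      exact hxyz (by rw [hx, hy, hz])
    · -- x = 0, y = 0, e3
      subst hx; subst hy
      have hz3 : c * z ^ 3 = 0 := by linear_combination e3
      have hz : z = 0 := cube_eq_zero ((mul_eq_zero.1 hz3).resolve_left hc)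
      exact hxyz (by rw [hz])
    · -- x = 0, e2, z = 0
      subst hx; subst hz
      have hy3 : b * y ^ 3 = 0 := by linear_combination e2
      have hy : y = 0 := cube_eq_zero ((mul_eq_zero.1 hy3).resolve_left hb)
      exact hxyz (by rw [hy])
    · -- x = 0, e2, e3
      subst hx
      have hy3 : (b + 1 - c) * y ^ 3 = 0 := by linear_combination c*e2 - (1+b)*e3
      have hy : y = 0 := cube_eq_zero ((mul_eq_zero.1 hy3).resolve_left h5)
      subst hy
      have hz3 : c * z ^ 3 = 0 := by linear_combination e3
      have hz : z = 0 := cube_eq_zero ((mul_eq_zero.1 hz3).resolve_left hc)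
      exact hxyz (by rw [hz])
    · -- e1, y = 0, z = 0
      subst hy; subst hz
      have hx3 : a * x ^ 3 = 0 := by linear_combination e1
      have hx : x = 0 := cube_eq_zero ((mul_eq_zero.1 hx3).resolve_left ha)
      exact hxyz (by rw [hx])
    · -- e1, y = 0, e3
      subst hy
      have hx3 : (c + 1 - a) * x ^ 3 = 0 := by linear_combination c*e1 - (a-1)*e3
      have hx : x = 0 := cube_eq_zero ((mul_eq_zero.1 hx3).resolve_left h6)
      subst hx
      have hz3 : c * z ^ 3 = 0 := by linear_combination e3
      have hz : z = 0 := cube_eq_zero ((mul_eq_zero.1 hz3).resolve_left hc)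
      exact hxyz (by rw [hz])
    · -- e1, e2, z = 0
      subst hz
      have hx3 : (a + 1 - b) * x ^ 3 = 0 := by linear_combination b*e1 - (1+a)*e2
      have hx : x = 0 := cube_eq_zero ((mul_eq_zero.1 hx3).resolve_left h4)
      subst hx
      have hy3 : b * y ^ 3 = 0 := by linear_combination e2
      have hy : y = 0 := cube_eq_zero ((mul_eq_zero.1 hy3).resolve_left hb)
      exact hxyz (by rw [hy])
    · -- e1, e2, e3
      have hS : (a + b + c) * (x ^ 3 + y ^ 3 + z ^ 3) = 0 := by
        linear_combination e1 + e2 + e3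
      have hPhi : x ^ 3 + y ^ 3 + z ^ 3 = 0 := (mul_eq_zero.1 hS).resolve_left habc
      have hx3 : x ^ 3 = 0 := by
        linear_combination ((1 + a + 2*b)*hPhi - e1 - 2*e2) / 3
      have hx : x = 0 := cube_eq_zero hx3
      subst hx
      have hz3 : z ^ 3 = 0 := by linear_combination e2 - b*hPhi
      have hz : z = 0 := cube_eq_zero hz3
      subst hz
      have hy3 : y ^ 3 = 0 := by linear_combination hPhi
      have hy : y = 0 := cube_eq_zero hy3
      exact hxyz (by rw [hy])
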